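/- Let F be an algebraically closed field of characteristic different from 2 and g ∈ SL₃(F). Then there exist k ∈ SO(3,F) and an upper triangular matrix b ∈ SL₃(F) with g = kb if and only if c₁(g) ≠ 0 and c₂(g) ≠ 0. -/
import Mathlib


open Matrix

/-- The standard symmetric bilinear form on `R³`: `(v,w) = ∑ i, v i * w i`. -/
def bil {R : Type*} [CommRing R] (v w : Fin 3 → R) : R := ∑ j, v j * w j

/-- The `j`-th column of a 3×3 matrix. -/
def vcol {R : Type*} (g : Matrix (Fin 3) (Fin 3) R) (j : Fin 3) : Fin 3 → R :=
  fun i => g i j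

/-- Membership in `SO(3,R)`: `kᵀk = 1` and `det k = 1`. -/
def SO3 {R : Type*} [CommRing R] (g : Matrix (Fin 3) (Fin 3) R) : Prop :=
  gᵀ * g = 1 ∧ g.det = 1

/-- A 3×3 matrix is upper triangular. -/
def UpperTri {R : Type*} [CommRing R] (b : Matrix (Fin 3) (Fin 3) R) : Prop :=
  ∀ i j : Fin 3, j < i → b i j = 0

/-- `c₁(g) = (v₁(g), v₁(g))`. -/
def c1 {R : Type*} [CommRing R] (g : Matrix (Fin 3) (Fin 3) R) : R :=
  bil (vcol g 0) (vcol g 0)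

/-- `c₂(g) = (v₁(g),v₁(g))(v₂(g),v₂(g)) − (v₁(g),v₂(g))²`. -/
def c2 {R : Type*} [CommRing R] (g : Matrix (Fin 3) (Fin 3) R) : R :=
  bil (vcol g 0) (vcol g 0) * bil (vcol g 1) (vcol g 1) - (bil (vcol g 0) (vcol g 1)) ^ 2

/-- `c₃(g) = (v₁(g), v₂(g))`. -/
def c3 {R : Type*} [CommRing R] (g : Matrix (Fin 3) (Fin 3) R) : R :=
  bil (vcol g 0) (vcol g 1)

/-!
Statement 8: Over an algebraically closed field `F` of characteristic ≠ 2, a matrix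
`g ∈ SL₃(F)` factors as `g = k b` with `k ∈ SO(3,F)` and `b ∈ SL₃(F)` upper
triangular iff `c₁(g) ≠ 0` and `c₂(g) ≠ 0`.
-/

section Aux

set_option maxHeartbeats 1000000

/-- The scaled second Gram–Schmidt vector `c₁(g)·v₂ − c₃(g)·v₁`. -/
def foW {R : Type*} [CommRing R] (g : Matrix (Fin 3) (Fin 3) R) : Fin 3 → R :=
  fun i => c1 g * g i 1 - c3 g * g i 0

/-- The cross product of the first column of `g` with `foW g`. -/
def foX {R : Type*} [CommRing R] (g : Matrix (Fin 3) (Fin 3) R) : Fin 3 → R :=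
  ![g 1 0 * foW g 2 - g 2 0 * foW g 1,
    g 2 0 * foW g 0 - g 0 0 * foW g 2,
    g 0 0 * foW g 1 - g 1 0 * foW g 0]

/-- Candidate orthogonal matrix with columns `α⁻¹ v₁`, `β⁻¹ w`, `(αβ)⁻¹ x`. -/
def foK {F : Type*} [Field F] (g : Matrix (Fin 3) (Fin 3) F) (α β : F)
    (w x : Fin 3 → F) : Matrix (Fin 3) (Fin 3) F :=
  Matrix.of fun i j => ![α⁻¹ * g i 0, β⁻¹ * w i, (α * β)⁻¹ * x i] j

lemma foK_orth {F : Type*} [Field F] (g : Matrix (Fin 3) (Fin 3) F) (α β : F)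
    (w x : Fin 3 → F) (hα0 : α ≠ 0) (hβ0 : β ≠ 0)
    (hgg : g 0 0 * g 0 0 + g 1 0 * g 1 0 + g 2 0 * g 2 0 = α * α)
    (hgw : g 0 0 * w 0 + g 1 0 * w 1 + g 2 0 * w 2 = 0)
    (hgx : g 0 0 * x 0 + g 1 0 * x 1 + g 2 0 * x 2 = 0)
    (hww : w 0 * w 0 + w 1 * w 1 + w 2 * w 2 = β * β)
    (hwx : w 0 * x 0 + w 1 * x 1 + w 2 * x 2 = 0)
    (hxx : x 0 * x 0 + x 1 * x 1 + x 2 * x 2 = β * α * (β * α)) :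
    (foK g α β w x)ᵀ * foK g α β w x = 1 := by
  ext i j
  fin_cases i <;> fin_cases j <;>
    simp only [foK, Matrix.transpose_apply, Matrix.mul_apply, Fin.sum_univ_three,
      Matrix.of_apply, Matrix.cons_val_zero, Matrix.cons_val_one, Matrix.head_cons,
      Matrix.cons_val_two, Matrix.tail_cons, Matrix.one_apply, Fin.ext_iff] <;>
    norm_num <;> field_simp
  · linear_combination hgg
  · linear_combination hgw
  · linear_combination hgx
  · linear_combination hgw
  · linear_combination hww
  · linear_combination hwx
  · linear_combination hgx
  · linear_combination hwx
  · linear_combination hxx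

lemma foK_det {F : Type*} [Field F] (g : Matrix (Fin 3) (Fin 3) F) (α β : F)
    (w x : Fin 3 → F) (hα0 : α ≠ 0) (hβ0 : β ≠ 0)
    (hd : g 0 0 * (w 1 * x 2 - w 2 * x 1) - w 0 * (g 1 0 * x 2 - g 2 0 * x 1)
        + x 0 * (g 1 0 * w 2 - g 2 0 * w 1) = α * α * (β * β)) :
    (foK g α β w x).det = 1 := by
  have hA : α⁻¹ * α = 1 := inv_mul_cancel₀ hα0
  have hB : β⁻¹ * β = 1 := inv_mul_cancel₀ hβ0
  rw [foK, Matrix.det_fin_three]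
  simp only [Matrix.of_apply, Matrix.cons_val_zero, Matrix.cons_val_one,
    Matrix.head_cons, Matrix.cons_val_two, Matrix.tail_cons, mul_inv]
  linear_combination α⁻¹ ^ 2 * β⁻¹ ^ 2 * hd + (α⁻¹ * α + 1) * (β⁻¹ * β) ^ 2 * hA
    + (β⁻¹ * β + 1) * hB

lemma foK_tri {F : Type*} [Field F] (g : Matrix (Fin 3) (Fin 3) F) (α β : F)
    (w x : Fin 3 → F)
    (hw1 : w 0 * g 0 0 + w 1 * g 1 0 + w 2 * g 2 0 = 0)
    (hx1 : x 0 * g 0 0 + x 1 * g 1 0 + x 2 * g 2 0 = 0)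
    (hx2 : x 0 * g 0 1 + x 1 * g 1 1 + x 2 * g 2 1 = 0) :
    UpperTri ((foK g α β w x)ᵀ * g) := by
  intro i j hlt
  fin_cases i <;> fin_cases j <;> first
    | exact absurd hlt (by decide)
    | (simp only [foK, Fin.zero_eta, Fin.mk_one, Fin.reduceFinMk, Matrix.transpose_apply,
        Matrix.mul_apply, Fin.sum_univ_three, Matrix.of_apply, Matrix.cons_val_zero,
        Matrix.cons_val_one, Matrix.head_cons, Matrix.cons_val_two, Matrix.tail_cons]
       first
        | linear_combination β⁻¹ * hw1
        | linear_combination α⁻¹ * β⁻¹ * hx1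
        | linear_combination α⁻¹ * β⁻¹ * hx2)

end Aux

set_option maxHeartbeats 1000000 in
theorem factorization_open_orbit {F : Type*} [Field F] [IsAlgClosed F]
    (hchar : (2 : F) ≠ 0) (g : Matrix (Fin 3) (Fin 3) F) (hg : g.det = 1) :
    (∃ k b : Matrix (Fin 3) (Fin 3) F, SO3 k ∧ UpperTri b ∧ b.det = 1 ∧ g = k * b)
      ↔ (c1 g ≠ 0 ∧ c2 g ≠ 0) := by
  constructor
  · rintro ⟨k, b, ⟨hk, hdk⟩, hub, hdb, rfl⟩
    have e00 := congrFun (congrFun hk 0) 0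
    have e01 := congrFun (congrFun hk 0) 1
    have e11 := congrFun (congrFun hk 1) 1
    simp [Matrix.mul_apply, Matrix.transpose_apply, Fin.sum_univ_three,
      Matrix.one_apply] at e00 e01 e11
    have hb10 : b 1 0 = 0 := hub 1 0 (by decide)
    have hb20 : b 2 0 = 0 := hub 2 0 (by decide)
    have hb21 : b 2 1 = 0 := hub 2 1 (by decide)
    rw [Matrix.det_fin_three] at hdb
    simp [hb10, hb20, hb21] at hdb
    have h00 : b 0 0 ≠ 0 := left_ne_zero_of_mul_eq_one
      (a := b 0 0) (b := b 1 1 * b 2 2) (by linear_combination hdb)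
    have h11 : b 1 1 ≠ 0 := left_ne_zero_of_mul_eq_one
      (a := b 1 1) (b := b 0 0 * b 2 2) (by linear_combination hdb)
    constructor
    · have hc1 : c1 (k * b) = b 0 0 ^ 2 := by
        simp only [c1, bil, vcol, Matrix.mul_apply, Fin.sum_univ_three, hb10, hb20,
          mul_zero, zero_mul, add_zero]
        linear_combination (b 0 0) ^ 2 * e00
      rw [hc1]; exact pow_ne_zero 2 h00
    · have hc2 : c2 (k * b) = (b 0 0 * b 1 1) ^ 2 := by
        simp only [c2, c3, bil, vcol, Matrix.mul_apply, Fin.sum_univ_three, hb10, hb20,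
          hb21, mul_zero, zero_mul, add_zero]
        linear_combination (b 0 0) ^ 2 * (b 1 1) ^ 2 *
          ((k 0 1 * k 0 1 + k 1 1 * k 1 1 + k 2 1 * k 2 1) * e00 + e11
            - (k 0 0 * k 0 1 + k 1 0 * k 1 1 + k 2 0 * k 2 1) * e01)
      rw [hc2]; exact pow_ne_zero 2 (mul_ne_zero h00 h11)
  · rintro ⟨h1, h2⟩
    obtain ⟨α, hα⟩ := IsAlgClosed.exists_pow_nat_eq (c1 g) (n := 2) two_pos
    obtain ⟨β, hβ⟩ := IsAlgClosed.exists_pow_nat_eq (c1 g * c2 g) (n := 2) two_pos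
    have hα0 : α ≠ 0 := fun h => h1 (by rw [← hα, h]; ring)
    have hβ0 : β ≠ 0 := fun h => mul_ne_zero h1 h2 (by rw [← hβ, h]; ring)
    simp only [c1, c2, c3, bil, vcol, Fin.sum_univ_three] at hα hβ
    have hk : (foK g α β (foW g) (foX g))ᵀ * foK g α β (foW g) (foX g) = 1 := by
      apply foK_orth g α β _ _ hα0 hβ0 <;>
        try simp only [foW, foX, c1, c3, bil, vcol, Fin.sum_univ_three,
          Matrix.cons_val_zero, Matrix.cons_val_one, Matrix.head_cons,
          Matrix.cons_val_two, Matrix.tail_cons]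
      · linear_combination -hα
      · ring
      · ring
      · linear_combination -hβ
      · ring
      · linear_combination (-(β ^ 2)) * hα
          - (g 0 0 * g 0 0 + g 1 0 * g 1 0 + g 2 0 * g 2 0) * hβ
    have hdk : (foK g α β (foW g) (foX g)).det = 1 := by
      apply foK_det g α β _ _ hα0 hβ0
      simp only [foW, foX, c1, c3, bil, vcol, Fin.sum_univ_three,
        Matrix.cons_val_zero, Matrix.cons_val_one, Matrix.head_cons,
        Matrix.cons_val_two, Matrix.tail_cons]
      linear_combination (-(β ^ 2)) * hα
        - (g 0 0 * g 0 0 + g 1 0 * g 1 0 + g 2 0 * g 2 0) * hβ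
    refine ⟨foK g α β (foW g) (foX g), (foK g α β (foW g) (foX g))ᵀ * g,
      ⟨hk, hdk⟩, ?_, ?_, ?_⟩
    · apply foK_tri <;>
        simp only [foW, foX, c1, c3, bil, vcol, Fin.sum_univ_three,
          Matrix.cons_val_zero, Matrix.cons_val_one, Matrix.head_cons,
          Matrix.cons_val_two, Matrix.tail_cons] <;> ring
    · rw [Matrix.det_mul, Matrix.det_transpose, hdk, hg, mul_one]
    · rw [← Matrix.mul_assoc, mul_eq_one_comm.mp hk, Matrix.one_mul]
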